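/- Let q̂ ∈ ℝ^K, let r ∈ ℝ^K with r_k > 0 for all k, suppose ⟨q̂, p_{·im}⟩ > 0 for all i, m, and define Γ_x := (1/(2M)) Σ_{m=1}^M Σ_{i=1}^I Σ_{j=1}^I Δ(x_{im}, p_{·im}) · diag(r⁻¹) · diag((p_{kim}(δ_{ij} − p_{kjm}))_{k=1,…,K}) · Δ(x_{jm}, p_{·jm})ᵀ, where Δ(z, π) := z·(E_K/⟨q̂, π⟩ − (π·q̂ᵀ)/⟨q̂, π⟩²). If T is any symmetric K×K matrix with T·𝟙 = q̂ (𝟙 the all-ones vector), then 𝟙ᵀ · T · Γ_x · T · 𝟙 = 0. -/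

import Mathlib

open scoped BigOperators
open Matrix

/-- The derivative block `Δ(z, π) = z (E_K/⟨q̂, π⟩ − (π·q̂ᵀ)/⟨q̂, π⟩²)`. -/
noncomputable def DeltaMat {K : ℕ} (qhat : Fin K → ℝ) (z : ℝ) (π : Fin K → ℝ) :
    Matrix (Fin K) (Fin K) ℝ :=
  z • ((∑ k, qhat k * π k)⁻¹ • (1 : Matrix (Fin K) (Fin K) ℝ) -
    ((∑ k, qhat k * π k) ^ 2)⁻¹ • Matrix.vecMulVec π qhat)

/-- The covariance matrix `Γ_x` of the limiting score in the central limit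
theorem for finite reference databases. -/
noncomputable def GammaMat {K I M : ℕ} (p : Fin K → Fin I → Fin M → ℝ)
    (x : Fin I → Fin M → ℕ) (r : Fin K → ℝ) (qhat : Fin K → ℝ) :
    Matrix (Fin K) (Fin K) ℝ :=
  (1 / (2 * (M : ℝ))) •
    ∑ m : Fin M, ∑ i : Fin I, ∑ j : Fin I,
      DeltaMat qhat (x i m : ℝ) (fun k => p k i m) *
        Matrix.diagonal (fun k => (r k)⁻¹) *
        Matrix.diagonal (fun k => p k i m * ((if i = j then (1 : ℝ) else 0) - p k j m)) *
        (DeltaMat qhat (x j m : ℝ) (fun k => p k j m))ᵀ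

lemma vecMul_smul_matrix {K : ℕ} (c : ℝ) (A : Matrix (Fin K) (Fin K) ℝ) (v : Fin K → ℝ) :
    Matrix.vecMul v (c • A) = c • Matrix.vecMul v A := by
  funext i
  simp [Matrix.vecMul, dotProduct, Finset.mul_sum, mul_left_comm]

lemma vecMul_finsum {K : ℕ} {ι : Type*} (s : Finset ι) (f : ι → Matrix (Fin K) (Fin K) ℝ)
    (v : Fin K → ℝ) :
    Matrix.vecMul v (∑ a ∈ s, f a) = ∑ a ∈ s, Matrix.vecMul v (f a) := by
  funext i
  simp only [Matrix.vecMul, dotProduct, Finset.sum_apply, Matrix.sum_apply,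
    Finset.mul_sum]
  exact Finset.sum_comm

lemma vecMul_DeltaMat {K : ℕ} (qhat : Fin K → ℝ) (z : ℝ) (π : Fin K → ℝ)
    (hs : (∑ k, qhat k * π k) ≠ 0) :
    Matrix.vecMul qhat (DeltaMat qhat z π) = 0 := by
  set s : ℝ := ∑ k, qhat k * π k with hsdef
  funext l
  simp only [DeltaMat, Matrix.vecMul, dotProduct, Matrix.smul_apply,
    Matrix.sub_apply, Matrix.one_apply, Matrix.vecMulVec_apply, smul_eq_mul,
    Pi.zero_apply]
  have h : ∀ k : Fin K, qhat k * (z * ((s⁻¹ * (if k = l then (1:ℝ) else 0)) - (s^2)⁻¹ * (π k * qhat l)))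
      = z * s⁻¹ * (if k = l then qhat k else 0) - z * (s^2)⁻¹ * qhat l * (qhat k * π k) := by
    intro k; by_cases hkl : k = l <;> simp [hkl] <;> ring
  rw [Finset.sum_congr rfl (fun k _ => h k), Finset.sum_sub_distrib, ← Finset.mul_sum,
    ← Finset.mul_sum, Finset.sum_ite_eq' Finset.univ l qhat, ← hsdef]
  simp only [Finset.mem_univ, if_true]
  field_simp
  ring

/-- If `T` is symmetric with `T·𝟙 = q̂`, then `𝟙ᵀ·T·Γ_x·T·𝟙 = 0`. -/
theorem ones_T_Gamma_T_ones_eq_zero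
    (K I M : ℕ) (hK : 2 ≤ K) (hI : 2 ≤ I) (hM : 1 ≤ M)
    (p : Fin K → Fin I → Fin M → ℝ)
    (hp0 : ∀ k i m, 0 ≤ p k i m)
    (hp1 : ∀ k m, ∑ i, p k i m = 1)
    (x : Fin I → Fin M → ℕ)
    (hx2 : ∀ i m, x i m ≤ 2)
    (hxsum : ∀ m, ∑ i, x i m = 2)
    (qhat : Fin K → ℝ) (r : Fin K → ℝ) (hr : ∀ k, 0 < r k)
    (hq : ∀ i m, 0 < ∑ k, qhat k * p k i m)
    (T : Matrix (Fin K) (Fin K) ℝ) (hTsymm : T.IsSymm)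
    (hT : T.mulVec (fun _ => (1 : ℝ)) = qhat) :
    dotProduct (fun _ => (1 : ℝ))
      ((T * GammaMat p x r qhat * T).mulVec (fun _ => (1 : ℝ))) = 0 := by
  have hvq : Matrix.vecMul (fun _ => (1 : ℝ)) T = qhat := by
    rw [← Matrix.mulVec_transpose, hTsymm.eq, hT]
  have hkey : Matrix.vecMul qhat (GammaMat p x r qhat) = 0 := by
    unfold GammaMat
    rw [vecMul_smul_matrix]
    have hterm : (Matrix.vecMul qhat (∑ m : Fin M, ∑ i : Fin I, ∑ j : Fin I,
        DeltaMat qhat (x i m : ℝ) (fun k => p k i m) *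
          Matrix.diagonal (fun k => (r k)⁻¹) *
          Matrix.diagonal (fun k => p k i m * ((if i = j then (1 : ℝ) else 0) - p k j m)) *
          (DeltaMat qhat (x j m : ℝ) (fun k => p k j m))ᵀ)) = 0 := by
      rw [vecMul_finsum]
      refine Finset.sum_eq_zero fun m _ => ?_
      rw [vecMul_finsum]
      refine Finset.sum_eq_zero fun i _ => ?_
      rw [vecMul_finsum]
      refine Finset.sum_eq_zero fun j _ => ?_
      have hD : Matrix.vecMul qhat (DeltaMat qhat (x i m : ℝ) (fun k => p k i m)) = 0 :=
        vecMul_DeltaMat qhat (x i m : ℝ) (fun k => p k i m) (ne_of_gt (hq i m))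
      rw [mul_assoc, mul_assoc, ← Matrix.vecMul_vecMul, hD, Matrix.zero_vecMul]
    rw [hterm, smul_zero]
  calc dotProduct (fun _ => (1 : ℝ))
        ((T * GammaMat p x r qhat * T).mulVec (fun _ => (1 : ℝ)))
      = dotProduct (Matrix.vecMul (fun _ => (1 : ℝ)) (T * GammaMat p x r qhat * T))
          (fun _ => (1 : ℝ)) := (Matrix.dotProduct_mulVec _ _ _)
    _ = 0 := by
        rw [← Matrix.vecMul_vecMul, ← Matrix.vecMul_vecMul, hvq, hkey, Matrix.zero_vecMul,
          zero_dotProduct]
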